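/- Let T be the tree obtained from the star K_{1,3} by subdividing each of its three edges exactly t times (so T has n = 3t + 4 vertices). Then pe(T) = (n-1)/3 = t + 1. -/

import Mathlib

open SimpleGraph

variable {V : Type*} [Fintype V] [DecidableEq V]

/-- Distance from a vertex `u` to the vertex set of a walk `P`. -/
noncomputable def walkDist (G : SimpleGraph V) {a b : V} (P : G.Walk a b) (u : V) : ℕ :=
  P.support.toFinset.inf' ⟨a, List.mem_toFinset.mpr P.start_mem_support⟩ (fun x => G.dist u x)

/-- Eccentricity of a walk: max distance from any vertex of `G` to the walk. -/
noncomputable def eccW (G : SimpleGraph V) {a b : V} (P : G.Walk a b) : ℕ :=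
  Finset.univ.sup (walkDist G P)

/-- Path eccentricity of a graph. -/
noncomputable def pe (G : SimpleGraph V) : ℕ :=
  sInf {m | ∃ (a b : V) (P : G.Walk a b), P.IsPath ∧ eccW G P = m}

/-- `P` is a longest path in `G`. -/
def IsLongestPath (G : SimpleGraph V) {a b : V} (P : G.Walk a b) : Prop :=
  P.IsPath ∧ ∀ (c d : V) (Q : G.Walk c d), Q.IsPath → Q.length ≤ P.length

/-- `G` is `k`-connected. -/
def KConnected (k : ℕ) (G : SimpleGraph V) : Prop :=
  k + 1 ≤ Fintype.card V ∧
    ∀ S : Finset V, S.card < k → (G.induce ((↑S : Set V)ᶜ)).Connected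

/-- Adjacency relation of the spider obtained from `K_{1,3}` by subdividing each
edge `t` times: the center is `none`; leg `i` consists of vertices
`some (i, 0), …, some (i, t)` forming a path starting at the center. -/
def spiderRel (t : ℕ) : Option (Fin 3 × Fin (t + 1)) → Option (Fin 3 × Fin (t + 1)) → Prop
  | none, some p => p.2.val = 0
  | some p, some q => p.1 = q.1 ∧ q.2.val = p.2.val + 1
  | _, _ => False

-- my auxiliaries
abbrev SV (t : ℕ) := Option (Fin 3 × Fin (t + 1))

abbrev SG (t : ℕ) : SimpleGraph (SV t) := SimpleGraph.fromRel (spiderRel t)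

lemma adj_center (t : ℕ) (i : Fin 3) : (SG t).Adj (some (i, ⟨0, Nat.succ_pos t⟩)) none := by
  rw [fromRel_adj]
  exact ⟨by simp, Or.inr rfl⟩

lemma adj_step (t : ℕ) (i : Fin 3) (k : ℕ) (h1 : k < t + 1) (h2 : k + 1 < t + 1) :
    (SG t).Adj (some (i, ⟨k + 1, h2⟩)) (some (i, ⟨k, h1⟩)) := by
  rw [fromRel_adj]
  refine ⟨by simp, Or.inr ⟨rfl, rfl⟩⟩

def toCenter (t : ℕ) (i : Fin 3) : (k : ℕ) → (h : k < t + 1) → (SG t).Walk (some (i, ⟨k, h⟩)) none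
  | 0, _ => Walk.cons (adj_center t i) Walk.nil
  | (k + 1), h => Walk.cons (adj_step t i k (by omega) h) (toCenter t i k (by omega))

lemma length_toCenter (t : ℕ) (i : Fin 3) : ∀ (k : ℕ) (h : k < t + 1),
    (toCenter t i k h).length = k + 1
  | 0, _ => rfl
  | (k + 1), h => by
      simp [toCenter, length_toCenter t i k (by omega)]

lemma mem_toCenter (t : ℕ) (i : Fin 3) : ∀ (k : ℕ) (h : k < t + 1),
    ∀ x ∈ (toCenter t i k h).support,
      x = none ∨ ∃ (m : ℕ) (hm : m < t + 1), m ≤ k ∧ x = some (i, ⟨m, hm⟩)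
  | 0, h => by
      intro x hx
      rw [toCenter, Walk.support_cons, Walk.support_nil, List.mem_cons, List.mem_singleton] at hx
      rcases hx with hx | hx
      · exact Or.inr ⟨0, Nat.succ_pos t, le_refl 0, hx⟩
      · exact Or.inl hx
  | (k + 1), h => by
      intro x hx
      rw [toCenter, Walk.support_cons, List.mem_cons] at hx
      rcases hx with hx | hx
      · exact Or.inr ⟨k + 1, h, le_refl _, hx⟩
      · rcases mem_toCenter t i k (by omega) x hx with h' | ⟨m, hm, hmk, h'⟩
        · exact Or.inl h'
        · exact Or.inr ⟨m, hm, by omega, h'⟩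

lemma isPath_toCenter (t : ℕ) (i : Fin 3) : ∀ (k : ℕ) (h : k < t + 1),
    (toCenter t i k h).IsPath
  | 0, _ => by
      rw [toCenter, Walk.cons_isPath_iff]
      exact ⟨Walk.IsPath.nil, by simp⟩
  | (k + 1), h => by
      rw [toCenter, Walk.cons_isPath_iff]
      refine ⟨isPath_toCenter t i k (by omega), ?_⟩
      intro hmem
      rcases mem_toCenter t i k (by omega) _ hmem with h' | ⟨m, hm, hmk, h'⟩
      · exact (Option.some_ne_none _) h'
      · simp only [Option.some_inj, Prod.mk.injEq, Fin.mk.injEq] at h'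
        omega

lemma lip_walk {W : Type*} {G : SimpleGraph W} {f : W → ℕ}
    (hf : ∀ a b, G.Adj a b → f a ≤ f b + 1) :
    ∀ {u v : W} (p : G.Walk u v), f u ≤ f v + p.length := by
  intro u v p
  induction p with
  | nil => simp
  | cons h p ih =>
      have := hf _ _ h
      simp only [Walk.length_cons]
      omega

lemma lip_dist {W : Type*} {G : SimpleGraph W} {f : W → ℕ}
    (hf : ∀ a b, G.Adj a b → f a ≤ f b + 1) {u v : W} (hr : G.Reachable u v) :
    f u ≤ f v + G.dist u v := by
  obtain ⟨p, hp⟩ := hr.exists_walk_length_eq_dist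
  rw [← hp]; exact lip_walk hf p

def legF (t : ℕ) (m : Fin 3) : SV t → ℕ := fun x =>
  x.elim 0 (fun p => if p.1 = m then p.2.val + 1 else 0)

lemma legF_lip (t : ℕ) (m : Fin 3) : ∀ a b, (SG t).Adj a b → legF t m a ≤ legF t m b + 1 := by
  have key : ∀ a b, spiderRel t a b → legF t m a ≤ legF t m b + 1 ∧ legF t m b ≤ legF t m a + 1 := by
    intro a b hab
    match a, b, hab with
    | none, some p, hab =>
        have hab' : p.2.val = 0 := hab
        simp only [legF, Option.elim]
        constructor
        · omega
        · split_ifs <;> omega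
    | some p, some q, hab =>
        have h1 : p.1 = q.1 := hab.1
        have h2 : q.2.val = p.2.val + 1 := hab.2
        simp only [legF, Option.elim, h1]
        split_ifs <;> omega
  intro a b hab
  rw [fromRel_adj] at hab
  rcases hab.2 with h | h
  · exact (key a b h).1
  · exact (key b a h).2

lemma reach_none (t : ℕ) (x : SV t) : (SG t).Reachable none x := by
  match x with
  | none => exact Reachable.refl none
  | some (i, j) => exact ⟨(toCenter t i j.val j.isLt).reverse⟩

lemma dist_to_none (t : ℕ) (u : SV t) : (SG t).dist u none ≤ t + 1 := by
  match u with
  | none => rw [SimpleGraph.dist_self]; omega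
  | some (i, j) =>
      calc (SG t).dist _ none ≤ _ := SimpleGraph.dist_le (toCenter t i j.val j.isLt)
      _ ≤ t + 1 := by rw [length_toCenter]; omega

lemma legConfine {t : ℕ} : ∀ {a v : SV t} (W : (SG t).Walk a v) (p : Fin 3 × Fin (t + 1)),
    a = some p → none ∉ W.support → ∀ x ∈ W.support, ∃ k, x = some (p.1, k) := by
  intro a v W
  induction W with
  | nil =>
      intro p hp hn x hx
      simp only [Walk.support_nil, List.mem_singleton] at hx
      subst hx; subst hp
      exact ⟨p.2, rfl⟩
  | @cons a b v h W ih =>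
      intro p hp hn x hx
      rw [Walk.support_cons, List.mem_cons] at hx
      rw [Walk.support_cons, List.mem_cons] at hn
      push_neg at hn
      obtain ⟨hn1, hn2⟩ := hn
      -- b is some
      have hb : ∃ q : Fin 3 × Fin (t + 1), b = some q := by
        match b with
        | none => exact absurd W.start_mem_support hn2
        | some q => exact ⟨q, rfl⟩
      obtain ⟨q, hq⟩ := hb
      have hq1 : q.1 = p.1 := by
        subst hp; subst hq
        rw [fromRel_adj] at h
        rcases h.2 with h' | h'
        · exact h'.1.symm
        · exact h'.1
      rcases hx with hx | hx
      · subst hx; subst hp; exact ⟨p.2, rfl⟩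
      · obtain ⟨k, hk⟩ := ih q hq hn2 x hx
        exact ⟨k, by rw [hk, hq1]⟩

lemma fromCenter {t : ℕ} {b : SV t} (Q : (SG t).Walk none b) (hQ : Q.IsPath) :
    ∃ i : Fin 3, ∀ x ∈ Q.support, x = none ∨ ∃ k, x = some (i, k) := by
  cases Q with
  | nil => exact ⟨0, by simp⟩
  | @cons _ w _ h W =>
      rw [Walk.cons_isPath_iff] at hQ
      have hw : ∃ q : Fin 3 × Fin (t + 1), w = some q := by
        match w with
        | none => exact absurd rfl h.ne
        | some q => exact ⟨q, rfl⟩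
      obtain ⟨q, hq⟩ := hw
      refine ⟨q.1, ?_⟩
      intro x hx
      rw [Walk.support_cons, List.mem_cons] at hx
      rcases hx with hx | hx
      · exact Or.inl hx
      · exact Or.inr (legConfine W q hq hQ.2 x hx)

lemma missedLeg {t : ℕ} {a b : SV t} (P : (SG t).Walk a b) (hP : P.IsPath) :
    ∃ i : Fin 3, ∀ x ∈ P.support, ∀ k, x ≠ some (i, k) := by
  by_cases hn : none ∈ P.support
  · obtain ⟨i1, h1⟩ := fromCenter (P.takeUntil none hn).reverse (hP.takeUntil hn).reverse
    obtain ⟨i2, h2⟩ := fromCenter (P.dropUntil none hn) (hP.dropUntil hn)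
    have hex : ∃ i : Fin 3, i ≠ i1 ∧ i ≠ i2 := by
      fin_cases i1 <;> fin_cases i2 <;> decide
    obtain ⟨i, hi1, hi2⟩ := hex
    refine ⟨i, ?_⟩
    intro x hx k hxk
    rw [← P.take_spec hn, Walk.mem_support_append_iff] at hx
    rcases hx with hx | hx
    · have hx' : x ∈ (P.takeUntil none hn).reverse.support := by
        rw [Walk.support_reverse, List.mem_reverse]; exact hx
      rcases h1 x hx' with h' | ⟨k', h'⟩
      · rw [hxk] at h'; exact Option.some_ne_none _ h'
      · rw [hxk, Option.some_inj, Prod.mk.injEq] at h'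
        exact hi1 h'.1
    · rcases h2 x hx with h' | ⟨k', h'⟩
      · rw [hxk] at h'; exact Option.some_ne_none _ h'
      · rw [hxk, Option.some_inj, Prod.mk.injEq] at h'
        exact hi2 h'.1
  · have ha : ∃ p : Fin 3 × Fin (t + 1), a = some p := by
      match a with
      | none => exact absurd P.start_mem_support hn
      | some p => exact ⟨p, rfl⟩
    obtain ⟨p, hp⟩ := ha
    have hex : ∃ i : Fin 3, i ≠ p.1 := by
      by_cases h0 : p.1 = 0
      · exact ⟨1, by simp [h0]⟩
      · exact ⟨0, fun h => h0 h.symm⟩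
    obtain ⟨i, hi⟩ := hex
    refine ⟨i, ?_⟩
    intro x hx k hxk
    obtain ⟨k', hk'⟩ := legConfine P p hp hn x hx
    rw [hxk, Option.some_inj, Prod.mk.injEq] at hk'
    exact hi hk'.1

lemma pe_spider (t : ℕ) : pe (SimpleGraph.fromRel (spiderRel t)) = t + 1 := by
  have htlt : t < t + 1 := Nat.lt_succ_self t
  -- the good path: tip of leg 0 to tip of leg 1 through the center
  set W0 := toCenter t 0 t htlt with hW0
  set W1 := toCenter t 1 t htlt with hW1
  set P := W0.append W1.reverse with hPdef
  have hW1r_path : W1.reverse.IsPath := (isPath_toCenter t 1 t htlt).reverse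
  have hP : P.IsPath := by
    rw [Walk.isPath_def, hPdef, Walk.support_append, List.nodup_append]
    have hnW1 : none ∉ W1.reverse.support.tail := by
      have h1 := hW1r_path
      rw [Walk.isPath_def, Walk.support_eq_cons, List.nodup_cons] at h1
      exact h1.1
    refine ⟨(isPath_toCenter t 0 t htlt).support_nodup, ?_, ?_⟩
    · exact (List.Nodup.of_cons (by
        rw [← Walk.support_eq_cons]; exact hW1r_path.support_nodup))
    · intro x hx0 y hx1 hxy
      rw [← hxy] at hx1
      have hx1' : x ∈ W1.support := by
        have := List.mem_of_mem_tail hx1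
        rw [Walk.support_reverse, List.mem_reverse] at this
        exact this
      have hxne : x ≠ none := fun h => hnW1 (h ▸ hx1)
      rcases mem_toCenter t 0 t htlt x hx0 with h | ⟨m, hm, _, h⟩
      · exact hxne h
      · rcases mem_toCenter t 1 t htlt x hx1' with h' | ⟨m', hm', _, h'⟩
        · exact hxne h'
        · rw [h] at h'
          simp only [Option.some_inj, Prod.mk.injEq] at h'
          exact absurd h'.1 (by decide)
  have hnoneP : none ∈ P.support := by
    rw [hPdef, Walk.mem_support_append_iff]
    exact Or.inl W0.end_mem_support
  -- eccW of P is at most t+1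
  have heccP : eccW (SG t) P ≤ t + 1 := by
    apply Finset.sup_le
    intro u _
    calc walkDist (SG t) P u ≤ (SG t).dist u none :=
          Finset.inf'_le _ (List.mem_toFinset.mpr hnoneP)
      _ ≤ t + 1 := dist_to_none t u
  -- every path has eccW at least t+1
  have hlow : ∀ (a b : SV t) (Q : (SG t).Walk a b), Q.IsPath → t + 1 ≤ eccW (SG t) Q := by
    intro a b Q hQ
    obtain ⟨i, hi⟩ := missedLeg Q hQ
    set tip : SV t := some (i, ⟨t, htlt⟩) with htip
    have h1 : t + 1 ≤ walkDist (SG t) Q tip := by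
      apply Finset.le_inf'
      intro x hx
      rw [List.mem_toFinset] at hx
      have hreach : (SG t).Reachable tip x := ((reach_none t tip).symm).trans (reach_none t x)
      have hlip := lip_dist (legF_lip t i) hreach
      have hftip : legF t i tip = t + 1 := by simp [legF, htip]
      have hfx : legF t i x = 0 := by
        match x with
        | none => rfl
        | some q =>
            have : q.1 ≠ i := by
              intro h
              exact hi _ hx q.2 (by rw [← h])
            simp [legF, this]
      omega
    calc t + 1 ≤ walkDist (SG t) Q tip := h1
      _ ≤ eccW (SG t) Q := Finset.le_sup (Finset.mem_univ tip)
  -- conclude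
  set S := {m | ∃ (a b : SV t) (Q : (SG t).Walk a b), Q.IsPath ∧ eccW (SG t) Q = m} with hS
  have hmem : eccW (SG t) P ∈ S := ⟨_, _, P, hP, rfl⟩
  have hub : pe (SG t) ≤ t + 1 := le_trans (Nat.sInf_le hmem) heccP
  have hlb : t + 1 ≤ pe (SG t) := by
    have hne : S.Nonempty := ⟨_, hmem⟩
    obtain ⟨a, b, Q, hQp, hQe⟩ := Nat.sInf_mem hne
    rw [show pe (SG t) = sInf S from rfl, ← hQe]
    exact hlow a b Q hQp
  show pe (SG t) = t + 1
  omega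

theorem stmt9 (t : ℕ) :
    Fintype.card (Option (Fin 3 × Fin (t + 1))) = 3 * t + 4 ∧
    pe (SimpleGraph.fromRel (spiderRel t)) = t + 1 ∧
    (pe (SimpleGraph.fromRel (spiderRel t)) : ℝ) =
      ((Fintype.card (Option (Fin 3 × Fin (t + 1))) : ℝ) - 1) / 3 := by
  have hcard : Fintype.card (Option (Fin 3 × Fin (t + 1))) = 3 * t + 4 := by
    simp [Fintype.card_option, Fintype.card_prod]
    omega
  refine ⟨hcard, pe_spider t, ?_⟩
  rw [pe_spider t, hcard]
  push_cast
  ring
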